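/- A variational Bewley preference that is not a Bewley preference violates transitivity: if c: Δ(S) → [0,∞] takes some value strictly between 0 and +∞ (i.e., c(q) ∈ (0, ∞) for some q ∈ Δ(S)), with u unbounded affine on X = ℝ^d, then there exist acts f, g, h with f ≿ g and g ≿ h but not f ≿ h. -/

import Mathlib

open Finset ENNReal

/-- `p` is a probability distribution on the finite state space `S`. -/
def IsProb {S : Type*} [Fintype S] (p : S → ℝ) : Prop :=
  (∀ s, 0 ≤ p s) ∧ ∑ s, p s = 1

/-- `u` is an affine function. -/
def IsAffineFn {X : Type*} [AddCommGroup X] [Module ℝ X] (u : X → ℝ) : Prop :=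
  ∀ x y : X, ∀ t : ℝ, u (t • x + (1 - t) • y) = t * u x + (1 - t) * u y

/-- `u` is unbounded. -/
def UnboundedFn {X : Type*} (u : X → ℝ) : Prop :=
  ∀ M : ℝ, ∃ x, M < |u x|

/-- The variational Bewley preference induced by `(u, c)`:
`f ≿ g` iff `∑ p(s)u(f(s)) + c(p) ≥ ∑ p(s)u(g(s))` for all `p ∈ Δ(S)`. -/
def VBPref {S : Type*} [Fintype S] {X : Type*} (u : X → ℝ)
    (c : (S → ℝ) → ℝ≥0∞) (f g : S → X) : Prop :=
  ∀ p : S → ℝ, IsProb p →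
    ((∑ s, p s * u (g s) : ℝ) : EReal) ≤ ((∑ s, p s * u (f s) : ℝ) : EReal) + (c p : EReal)

/-- The Bewley preference induced by `(u, P)`. -/
def BewPref {S : Type*} [Fintype S] {X : Type*} (u : X → ℝ)
    (P : Set (S → ℝ)) (f g : S → X) : Prop :=
  ∀ p ∈ P, (∑ s, p s * u (g s)) ≤ ∑ s, p s * u (f s)

/-- `min_{p ∈ Δ(S)} c(p) = 0` (the minimum value 0 is attained). -/
def MinZero {S : Type*} [Fintype S] (c : (S → ℝ) → ℝ≥0∞) : Prop :=
  ∃ p : S → ℝ, IsProb p ∧ c p = 0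

/-- Convexity of the perception function `c` on the simplex. -/
def ConvexPerc {S : Type*} [Fintype S] (c : (S → ℝ) → ℝ≥0∞) : Prop :=
  ∀ p q : S → ℝ, IsProb p → IsProb q → ∀ t : ℝ, 0 ≤ t → t ≤ 1 →
    c (fun s => t * p s + (1 - t) * q s) ≤
      ENNReal.ofReal t * c p + ENNReal.ofReal (1 - t) * c q

lemma affine_unbounded_surj {X : Type*} [AddCommGroup X] [Module ℝ X]
    (u : X → ℝ) (hu : IsAffineFn u) (hub : UnboundedFn u) : Function.Surjective u := by
  obtain ⟨x, hx⟩ := hub |u 0|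
  have hne : u x - u 0 ≠ 0 := by
    intro h
    have : u x = u 0 := by linarith [sub_eq_zero.mp h]
    rw [this] at hx; exact absurd hx (lt_irrefl _)
  intro y
  refine ⟨((y - u 0)/(u x - u 0)) • x + (1 - (y - u 0)/(u x - u 0)) • (0:X), ?_⟩
  rw [hu x 0 _]
  field_simp
  ring

lemma exists_sep {S : Type*} [Fintype S] (c : (S → ℝ) → ℝ≥0∞)
    (hconv : ConvexPerc c) (hlsc : LowerSemicontinuous c)
    (q : S → ℝ) (hq : IsProb q) (hq0 : c q ≠ 0) (hqt : c q ≠ ⊤) :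
    ∃ v : S → ℝ, (∀ p, IsProb p → ((∑ s, p s * v s : ℝ) : EReal) ≤ (c p : EReal)) ∧
      (c q : EReal) < ((2 * ∑ s, q s * v s : ℝ) : EReal) := by
  classical
  set k : ℝ := (c q).toReal with hkdef
  have hk : 0 < k := ENNReal.toReal_pos hq0 hqt
  set epi : Set ((S → ℝ) × ℝ) :=
    {x | IsProb x.1 ∧ 0 ≤ x.2 ∧ c x.1 ≤ ENNReal.ofReal x.2} with hepi
  -- convexity
  have hconvepi : Convex ℝ epi := by
    rintro x ⟨hx1, hx2, hx3⟩ y ⟨hy1, hy2, hy3⟩ a b ha hb hab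
    have hb' : b = 1 - a := by linarith
    refine ⟨⟨fun s => by
        simp only [Prod.fst_add, Prod.smul_fst, Pi.add_apply, Pi.smul_apply, smul_eq_mul]
        exact add_nonneg (mul_nonneg ha (hx1.1 s)) (mul_nonneg hb (hy1.1 s)), ?_⟩, ?_, ?_⟩
    · simp only [Prod.fst_add, Prod.smul_fst, Pi.add_apply, Pi.smul_apply, smul_eq_mul]
      rw [Finset.sum_add_distrib, ← Finset.mul_sum, ← Finset.mul_sum, hx1.2, hy1.2]
      linarith
    · simp only [Prod.snd_add, Prod.smul_snd, smul_eq_mul]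
      exact add_nonneg (mul_nonneg ha hx2) (mul_nonneg hb hy2)
    · have h1 := hconv x.1 y.1 hx1 hy1 a ha (by linarith)
      have h2 : ((a • x + b • y).1 : S → ℝ) = fun s => a * x.1 s + (1 - a) * y.1 s := by
        funext s
        simp only [Prod.fst_add, Prod.smul_fst, Pi.add_apply, Pi.smul_apply, smul_eq_mul, hb']
      rw [h2]
      refine h1.trans ?_
      have h3 : ENNReal.ofReal a * c x.1 ≤ ENNReal.ofReal a * ENNReal.ofReal x.2 :=
        mul_le_mul_right hx3 _
      have h4 : ENNReal.ofReal (1 - a) * c y.1 ≤ ENNReal.ofReal (1 - a) * ENNReal.ofReal y.2 :=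
        mul_le_mul_right hy3 _
      refine (add_le_add h3 h4).trans ?_
      rw [← ENNReal.ofReal_mul ha, ← ENNReal.ofReal_mul (by linarith),
        ← ENNReal.ofReal_add (mul_nonneg ha hx2) (mul_nonneg (by linarith) hy2)]
      apply ENNReal.ofReal_le_ofReal
      simp only [Prod.snd_add, Prod.smul_snd, smul_eq_mul, hb']
      exact le_rfl
  -- closedness
  have hclosed : IsClosed epi := by
    have h1 : IsClosed {x : (S → ℝ) × ℝ | IsProb x.1} := by
      have : {x : (S → ℝ) × ℝ | IsProb x.1} =
          (⋂ s, {x : (S → ℝ) × ℝ | 0 ≤ x.1 s}) ∩ {x : (S → ℝ) × ℝ | ∑ s, x.1 s = 1} := by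
        ext x; simp [IsProb, Set.mem_iInter]
      rw [this]
      exact IsClosed.inter
        (isClosed_iInter fun s => isClosed_le continuous_const
          ((continuous_apply s).comp continuous_fst))
        (isClosed_eq (continuous_finset_sum _ fun s _ =>
          (continuous_apply s).comp continuous_fst) continuous_const)
    have h2 : IsClosed {x : (S → ℝ) × ℝ | 0 ≤ x.2} := isClosed_le continuous_const continuous_snd
    have h3 : IsClosed {x : (S → ℝ) × ℝ | c x.1 ≤ ENNReal.ofReal x.2} := by
      rw [← isOpen_compl_iff]
      rw [isOpen_iff_mem_nhds]
      intro x hx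
      simp only [Set.mem_compl_iff, Set.mem_setOf_eq, not_le] at hx
      obtain ⟨m, hm1, hm2⟩ := exists_between hx
      have hev1 : ∀ᶠ y in nhds x, m < c y.1 :=
        (continuous_fst.tendsto x).eventually (hlsc x.1 m hm2)
      have hev2 : ∀ᶠ y in nhds x, ENNReal.ofReal y.2 < m := by
        have ht : Filter.Tendsto (fun y : (S → ℝ) × ℝ => ENNReal.ofReal y.2) (nhds x)
            (nhds (ENNReal.ofReal x.2)) :=
          (ENNReal.continuous_ofReal.comp continuous_snd).tendsto x
        exact ht.eventually (Filter.Tendsto.eventually_lt_const hm1 Filter.tendsto_id) |>.mono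
          fun y hy => hy
      filter_upwards [hev1, hev2] with y hy1 hy2
      simp only [Set.mem_compl_iff, Set.mem_setOf_eq, not_le]
      exact hy2.trans hy1
    have : epi = {x : (S → ℝ) × ℝ | IsProb x.1} ∩ ({x | 0 ≤ x.2} ∩ {x | c x.1 ≤ ENNReal.ofReal x.2}) := by
      ext x; simp [hepi, Set.mem_setOf_eq, and_assoc]
    rw [this]
    exact h1.inter (h2.inter h3)
  -- the point to separate
  have hx0 : ((q, k / 2) : (S → ℝ) × ℝ) ∉ epi := by
    rintro ⟨-, -, h3⟩
    have : c q ≤ ENNReal.ofReal (k/2) := h3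
    have h4 : ENNReal.ofReal (k/2) < c q := by
      conv_rhs => rw [← ENNReal.ofReal_toReal hqt]
      exact ENNReal.ofReal_lt_ofReal_iff hk |>.mpr (by linarith)
    exact absurd this (not_le.mpr h4)
  obtain ⟨φ, α, hα1, hα2⟩ := geometric_hahn_banach_point_closed hconvepi hclosed hx0
  -- decompose φ
  have hφ : ∀ (p : S → ℝ) (r : ℝ), φ (p, r) = φ (p, 0) + r * φ (0, 1) := by
    intro p r
    have : ((p, r) : (S → ℝ) × ℝ) = (p, 0) + r • ((0 : S → ℝ), (1:ℝ)) := by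
      simp [Prod.ext_iff]
    rw [this, map_add, map_smul, smul_eq_mul]
  set γ : ℝ := φ (0, 1) with hγdef
  have hqmem : ∀ r : ℝ, k ≤ r → ((q, r) : (S → ℝ) × ℝ) ∈ epi := by
    intro r hr
    exact ⟨hq, hk.le.trans hr, by
      rw [← ENNReal.ofReal_toReal hqt]; exact ENNReal.ofReal_le_ofReal hr⟩
  have hγpos : 0 < γ := by
    have h1 := hα2 _ (hqmem k le_rfl)
    rw [hφ] at h1 hα1
    nlinarith
  -- the separating vector
  set v : S → ℝ := fun s => (α - φ (Pi.single s 1, 0)) / γ with hvdef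
  have hLp : ∀ p : S → ℝ, φ (p, 0) = ∑ s, p s * φ (Pi.single s 1, 0) := by
    intro p
    have hp : ((p, (0:ℝ)) : (S → ℝ) × ℝ) = ∑ s, p s • ((Pi.single s 1 : S → ℝ), (0:ℝ)) := by
      rw [Prod.ext_iff]
      constructor
      · funext j
        simp [Prod.fst_sum, Finset.sum_apply, Pi.single_apply, mul_ite]
      · simp [Prod.snd_sum]
    rw [hp, map_sum]
    exact Finset.sum_congr rfl fun s _ => by rw [map_smul, smul_eq_mul]
  have hsum : ∀ p : S → ℝ, IsProb p → ∑ s, p s * v s = (α - φ (p, 0)) / γ := by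
    intro p hp
    calc ∑ s, p s * v s = ∑ s, (p s * α - p s * φ (Pi.single s 1, 0)) / γ :=
          Finset.sum_congr rfl fun s _ => by rw [hvdef]; ring
      _ = (∑ s, (p s * α - p s * φ (Pi.single s 1, 0))) / γ := by
          rw [Finset.sum_div]
      _ = (α - φ (p, 0)) / γ := by
          rw [Finset.sum_sub_distrib, ← Finset.sum_mul, hp.2, one_mul, hLp]
  refine ⟨v, ?_, ?_⟩
  · intro p hp
    by_cases hpt : c p = ⊤
    · simp [hpt]
    · have hmem : ((p, (c p).toReal) : (S → ℝ) × ℝ) ∈ epi :=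
        ⟨hp, ENNReal.toReal_nonneg, by rw [ENNReal.ofReal_toReal hpt]⟩
      have h1 := hα2 _ hmem
      rw [hφ] at h1
      have h2 : ∑ s, p s * v s ≤ (c p).toReal := by
        rw [hsum p hp]
        rw [div_le_iff₀ hγpos]
        linarith [h1]
      calc ((∑ s, p s * v s : ℝ) : EReal) ≤ (((c p).toReal : ℝ) : EReal) := by
            exact_mod_cast h2
        _ = (c p : EReal) := by
            rw [← ENNReal.ofReal_toReal hpt, EReal.coe_ennreal_ofReal,
              max_eq_left ENNReal.toReal_nonneg, ENNReal.toReal_ofReal ENNReal.toReal_nonneg]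
  · have h2 : k / 2 < ∑ s, q s * v s := by
      rw [hsum q hq]
      rw [lt_div_iff₀ hγpos]
      rw [hφ] at hα1
      linarith
    have h3 : (c q : EReal) = ((k : ℝ) : EReal) := by
      conv_lhs => rw [← ENNReal.ofReal_toReal hqt]
      rw [EReal.coe_ennreal_ofReal, max_eq_left ENNReal.toReal_nonneg]
    rw [h3]
    exact_mod_cast (by linarith : k < 2 * ∑ s, q s * v s)

theorem stmt16 {S : Type*} [Fintype S] {d : ℕ}
    (u : EuclideanSpace ℝ (Fin d) → ℝ) (c : (S → ℝ) → ℝ≥0∞)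
    (hu : IsAffineFn u) (hub : UnboundedFn u)
    (hc : MinZero c) (hconv : ConvexPerc c) (hlsc : LowerSemicontinuous c)
    (q : S → ℝ) (hq : IsProb q) (hq0 : c q ≠ 0) (hqt : c q ≠ ⊤) :
    ∃ f g h : S → EuclideanSpace ℝ (Fin d),
      VBPref u c f g ∧ VBPref u c g h ∧ ¬ VBPref u c f h := by
  obtain ⟨v, hkey, hviol⟩ := exists_sep c hconv hlsc q hq hq0 hqt
  choose w hw using affine_unbounded_surj u hu hub
  refine ⟨fun _ => w 0, fun s => w (v s), fun s => w (2 * v s), ?_, ?_, ?_⟩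
  · intro p hp
    have := hkey p hp
    simp only [hw, mul_zero, Finset.sum_const_zero, EReal.coe_zero, zero_add]
    exact this
  · intro p hp
    simp only [hw]
    have h2 : (∑ s, p s * (2 * v s) : ℝ) = (∑ s, p s * v s) + ∑ s, p s * v s := by
      rw [← Finset.sum_add_distrib]; exact Finset.sum_congr rfl fun s _ => by ring
    rw [h2, EReal.coe_add]
    exact add_le_add_right (hkey p hp) _
  · intro hV
    have hthis := hV q hq
    simp only [hw, mul_zero, Finset.sum_const_zero, EReal.coe_zero, zero_add] at hthis
    have he : (∑ s, q s * (2 * v s)) = 2 * ∑ s, q s * v s := by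
      rw [Finset.mul_sum]; exact Finset.sum_congr rfl fun s _ => by ring
    rw [he] at hthis
    exact absurd hthis (not_le.mpr hviol)
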